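/- Let $G \in \mathbb{R}^{n \times n}$ be symmetric, $H \in \mathbb{R}^{T \times n}$, $\mu > 0$, and suppose the block matrix $\begin{bmatrix} G & H^\top \\ H & \mu I_T \end{bmatrix}$ is positive semidefinite. Further let $\Gamma, \Xi \in \mathbb{R}^{n \times T}$ with $\Gamma\Gamma^\top \preceq \Xi\Xi^\top$, and let $K \in \mathbb{R}^{n \times n}$, $\varepsilon > 0$, $\pi > 0$, $P \succ 0$ such that $G = -\varepsilon P^{-1} - K H - H^\top K^\top - \mu \Xi\Xi^\top - \pi I_n$. Then $(K - \Gamma) H + H^\top (K - \Gamma)^\top + \pi I_n \preceq -\varepsilon P^{-1}$. -/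

import Mathlib

open Matrix in
/-- Full matrix-analytic content of the data-driven LMI: the block PSD
condition with `G = -ε P⁻¹ - K H - Hᵀ Kᵀ - μ Ξ Ξᵀ - π I`, together with the
noise energy bound `Γ Γᵀ ⪯ Ξ Ξᵀ`, implies the closed-loop decay inequality
`(K - Γ) H + Hᵀ (K - Γ)ᵀ + π I ⪯ -ε P⁻¹`. -/
theorem data_driven_lmi_implies_decay {n T : ℕ}
    (G : Matrix (Fin n) (Fin n) ℝ) (hG : G.IsSymm)
    (H : Matrix (Fin T) (Fin n) ℝ) (μ : ℝ) (hμ : 0 < μ)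
    (hblock : (Matrix.fromBlocks G Hᵀ H (μ • (1 : Matrix (Fin T) (Fin T) ℝ))).PosSemidef)
    (Γ Ξ : Matrix (Fin n) (Fin T) ℝ)
    (hnoise : (Ξ * Ξᵀ - Γ * Γᵀ).PosSemidef)
    (K : Matrix (Fin n) (Fin T) ℝ) (ε π : ℝ) (hε : 0 < ε) (hπ : 0 < π)
    (P : Matrix (Fin n) (Fin n) ℝ) (hP : P.PosDef)
    (hGdef : G = (-ε) • P⁻¹ - K * H - Hᵀ * Kᵀ - μ • (Ξ * Ξᵀ)
        - π • (1 : Matrix (Fin n) (Fin n) ℝ)) :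
    ((-ε) • P⁻¹ - ((K - Γ) * H + Hᵀ * (K - Γ)ᵀ
        + π • (1 : Matrix (Fin n) (Fin n) ℝ))).PosSemidef := by
  have hA : ((-ε) • P⁻¹ - ((K - Γ) * H + Hᵀ * (K - Γ)ᵀ
        + π • (1 : Matrix (Fin n) (Fin n) ℝ)))
      = (G + Γ * H + Hᵀ * Γᵀ + μ • (Γ * Γᵀ)) + μ • (Ξ * Ξᵀ - Γ * Γᵀ) := by
    subst hGdef
    simp [Matrix.sub_mul, Matrix.mul_sub, Matrix.transpose_sub, smul_sub]
    abel
  rw [hA]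
  have hApsd : (G + Γ * H + Hᵀ * Γᵀ + μ • (Γ * Γᵀ)).PosSemidef := by
    refine Matrix.PosSemidef.of_dotProduct_mulVec_nonneg ?_ ?_
    · unfold Matrix.IsHermitian
      simp [Matrix.transpose_add, Matrix.transpose_mul, Matrix.transpose_smul, hG.eq,
        Matrix.conjTranspose_eq_transpose_of_trivial]
      abel
    · intro x
      have hq := hblock.dotProduct_mulVec_nonneg (Sum.elim x (Γᵀ *ᵥ x))
      simp only [RCLike.star_def, star_trivial] at hq ⊢
      rw [Matrix.fromBlocks_mulVec, sumElim_dotProduct_sumElim] at hq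
      have e1 : (Γ * H) *ᵥ x = Γ *ᵥ (H *ᵥ x) := by rw [Matrix.mulVec_mulVec]
      have e2 : (Hᵀ * Γᵀ) *ᵥ x = Hᵀ *ᵥ (Γᵀ *ᵥ x) := by rw [Matrix.mulVec_mulVec]
      have e3 : (Γ * Γᵀ) *ᵥ x = Γ *ᵥ (Γᵀ *ᵥ x) := by rw [Matrix.mulVec_mulVec]
      have e4 : ∀ w : Fin T → ℝ, x ⬝ᵥ (Γ *ᵥ w) = (Γᵀ *ᵥ x) ⬝ᵥ w := by
        intro w
        rw [Matrix.dotProduct_mulVec, ← Matrix.mulVec_transpose]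
      simp only [Matrix.add_mulVec, Matrix.smul_mulVec, dotProduct_add,
        dotProduct_smul, e1, e2, e3, e4, smul_eq_mul,
        Matrix.mulVec_add, Matrix.smul_mulVec, Matrix.one_mulVec,
        dotProduct_smul, Sum.elim_comp_inl, Sum.elim_comp_inr] at hq ⊢
      linarith [hq]
  have hsm : (μ • (Ξ * Ξᵀ - Γ * Γᵀ)).PosSemidef := by
    refine Matrix.PosSemidef.of_dotProduct_mulVec_nonneg ?_ ?_
    · unfold Matrix.IsHermitian; simp [hnoise.1.eq]
    · intro x
      have := hnoise.dotProduct_mulVec_nonneg x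
      simp only [Matrix.smul_mulVec, dotProduct_smul, smul_eq_mul]
      positivity
  exact hApsd.add hsm
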